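/- With the setup of the previous statement, $[x_i^+, T_{w(i,m)}(x_{i-1}^+)] = (-1)^{m-1} h_{-\theta}(m)$ if $i = 0$, and $[x_i^+, T_{w(i,m)}(x_{i-1}^+)] = (-1)^{m-1} h_i(m)$ if $i \ne 0$, where $h_i = E_{i,i} - E_{i+1,i+1}$ and $h_{-\theta} = E_{N,N} - E_{1,1}$. -/

import Mathlib

/-- A copy of the affine Lie algebra `ĝl_N = gl_N ⊗ ℂ[t,t⁻¹] ⊕ ℂc` inside a Lie algebra `L`:
a family `E i j s` (the elements `E_{i,j}(s) = E_{i,j} ⊗ tˢ`, with matrix-unit indices in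
`ZMod N`, the label `N` corresponding to `0`) and a central element `c`, satisfying
`[X(r), Y(s)] = [X,Y](r+s) + r δ_{r+s,0} tr(XY) c`. -/
structure AffineGLData (N : ℕ) (L : Type) [LieRing L] [LieAlgebra ℂ L] where
  E : ZMod N → ZMod N → ℤ → L
  c : L
  central : ∀ y : L, ⁅c, y⁆ = 0
  bracket_eq : ∀ (i j k l : ZMod N) (r s : ℤ),
    ⁅E i j r, E k l s⁆ =
      (if j = k then E i l (r + s) else 0) - (if l = i then E k j (r + s) else 0) +
      (if j = k ∧ l = i ∧ r + s = 0 then (r : ℂ) • c else 0)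

variable {N : ℕ} {L : Type} [LieRing L] [LieAlgebra ℂ L]

/-- The affine Chevalley generator `x_k⁺` (`x_0⁺ = E_{N,1}(1)`, `x_i⁺ = E_{i,i+1}(0)`). -/
def xp (d : AffineGLData N L) (k : ZMod N) : L :=
  if k = 0 then d.E 0 1 1 else d.E k (k + 1) 0

/-- The affine Chevalley generator `x_k⁻` (`x_0⁻ = E_{1,N}(-1)`, `x_i⁻ = E_{i+1,i}(0)`). -/
def xm (d : AffineGLData N L) (k : ZMod N) : L :=
  if k = 0 then d.E 1 0 (-1) else d.E (k + 1) k 0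

/-- The exponential of `ad X` (exact whenever `(ad X)^3 = 0`, as holds for the
adjoint action of the Chevalley generators on `ĝl_N`). -/
noncomputable def expAd (X A : L) : L :=
  A + ⁅X, A⁆ + (2 : ℂ)⁻¹ • ⁅X, ⁅X, A⁆⁆

/-- The braid operator `T_k = exp(ad x_k⁺) exp(ad (-x_k⁻)) exp(ad x_k⁺)` on `ĝl_N`. -/
noncomputable def Taff (d : AffineGLData N L) (k : ZMod N) (A : L) : L :=
  expAd (xp d k) (expAd (-(xm d k)) (expAd (xp d k) A))

/-- `TaffComp d [k₁,…,kₗ] A = T_{k₁} (T_{k₂} ⋯ (T_{kₗ} A))`. -/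
noncomputable def TaffComp (d : AffineGLData N L) (ks : List (ZMod N)) (A : L) : L :=
  ks.foldr (Taff d) A

/-- The reduced word `s_{i+1} s_{i+2} ⋯ s_{i-2}` (length `N-2`). -/
def tailWord (N : ℕ) (i : ZMod N) : List (ZMod N) :=
  (List.range (N - 2)).map (fun k => i + (k : ZMod N) + 1)

/-- The reduced word of the translation `t_{-α_{i+1}}`; for `i = 1` this is
`s_2 s_3 ⋯ s_{N-1} s_0 s_1 s_0 s_{N-1} ⋯ s_3`. -/
def tWord (N : ℕ) (i : ZMod N) : List (ZMod N) :=
  (List.range (N - 2)).map (fun k => i + (k : ZMod N) + 1) ++ [i - 1, i, i - 1] ++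
    ((List.range (N - 3)).map (fun k => i + (k : ZMod N) + 2)).reverse

/-- The word of `w(i,m) = t_{-α_{i+1}}^{m-1} s_{i+1} s_{i+2} ⋯ s_{i-3} s_{i-2}`. -/
def wWord (N : ℕ) (i : ZMod N) (m : ℕ) : List (ZMod N) :=
  (List.replicate (m - 1) (tWord N i)).flatten ++ tailWord N i

set_option maxHeartbeats 1000000
section Aux16

variable {N : ℕ} {L : Type} [LieRing L] [LieAlgebra ℂ L]

/-- degree of `x_k⁺`. -/
def eps16 (k : ZMod N) : ℤ := if k = 0 then 1 else 0

lemma eps16_nonneg (k : ZMod N) : 0 ≤ eps16 k := by unfold eps16; split_ifs <;> omega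
lemma eps16_le_one (k : ZMod N) : eps16 k ≤ 1 := by unfold eps16; split_ifs <;> omega

lemma xp_eq16 (d : AffineGLData N L) (k : ZMod N) : xp d k = d.E k (k+1) (eps16 k) := by
  unfold xp eps16; split_ifs with h <;> simp [h]

lemma xm_eq16 (d : AffineGLData N L) (k : ZMod N) : xm d k = d.E (k+1) k (-eps16 k) := by
  unfold xm eps16; split_ifs with h <;> simp [h]

lemma central16 (d : AffineGLData N L) (y : L) : ⁅y, d.c⁆ = 0 := by
  rw [← lie_skew, d.central, neg_zero]

lemma natCast_ne16 (k : ℕ) [NeZero N] (h0 : 0 < k) (h : k < N) : (k : ZMod N) ≠ 0 := by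
  rw [Ne, ZMod.natCast_eq_zero_iff]
  exact fun hd => absurd (Nat.le_of_dvd h0 hd) (by omega)

lemma one_ne16 [NeZero N] (hN : 3 ≤ N) : (1 : ZMod N) ≠ 0 := by
  have := natCast_ne16 (N := N) 1 (by omega) (by omega); simpa using this

lemma two_ne16 [NeZero N] (hN : 3 ≤ N) : (2 : ZMod N) ≠ 0 := by
  have := natCast_ne16 (N := N) 2 (by omega) (by omega); simpa using this

lemma succ_ne16 [NeZero N] (hN : 3 ≤ N) (a : ZMod N) : a + 1 ≠ a := by
  intro h; exact one_ne16 hN (by linear_combination h)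

lemma add_two_ne16 [NeZero N] (hN : 3 ≤ N) (a : ZMod N) : a + 2 ≠ a := by
  intro h; exact two_ne16 hN (by linear_combination h)

/- ### single `expAd` computations -/

section expAdLemmas
variable (d : AffineGLData N L) (p q a b : ZMod N) (r s : ℤ)

lemma expAd_triv (hqa : q ≠ a) (hbp : b ≠ p) :
    expAd (d.E p q r) (d.E a b s) = d.E a b s := by
  simp [expAd, d.bracket_eq, hqa, hbp]

lemma expAdNeg_triv (hqa : q ≠ a) (hbp : b ≠ p) :
    expAd (-(d.E p q r)) (d.E a b s) = d.E a b s := by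
  simp [expAd, d.bracket_eq, hqa, hbp]

lemma expAd_row (hqp : q ≠ p) (hbp : b ≠ p) (hbq : b ≠ q) :
    expAd (d.E p q r) (d.E q b s) = d.E q b s + d.E p b (r + s) := by
  simp [expAd, d.bracket_eq, hqp, hbp, hbq, hqp.symm, hbp.symm, hbq.symm]

lemma expAdNeg_row (hqp : q ≠ p) (hbp : b ≠ p) (hbq : b ≠ q) :
    expAd (-(d.E p q r)) (d.E q b s) = d.E q b s - d.E p b (r + s) := by
  simp [expAd, d.bracket_eq, hqp, hbp, hbq, hqp.symm, hbp.symm, hbq.symm, sub_eq_add_neg]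

lemma expAd_col (hqp : q ≠ p) (hap : a ≠ p) (haq : a ≠ q) :
    expAd (d.E p q r) (d.E a p s) = d.E a p s - d.E a q (r + s) := by
  simp [expAd, d.bracket_eq, hqp, hap, haq, hqp.symm, hap.symm, haq.symm, sub_eq_add_neg]

lemma expAdNeg_col (hqp : q ≠ p) (hap : a ≠ p) (haq : a ≠ q) :
    expAd (-(d.E p q r)) (d.E a p s) = d.E a p s + d.E a q (r + s) := by
  simp [expAd, d.bracket_eq, hqp, hap, haq, hqp.symm, hap.symm, haq.symm]

lemma expAd_pp (hqp : q ≠ p) :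
    expAd (d.E p q r) (d.E p p s) = d.E p p s - d.E p q (r + s) := by
  simp [expAd, d.bracket_eq, hqp, hqp.symm, sub_eq_add_neg]

lemma expAdNeg_pp (hqp : q ≠ p) :
    expAd (-(d.E p q r)) (d.E p p s) = d.E p p s + d.E p q (r + s) := by
  simp [expAd, d.bracket_eq, hqp, hqp.symm]

lemma expAd_qq (hqp : q ≠ p) :
    expAd (d.E p q r) (d.E q q s) = d.E q q s + d.E p q (r + s) := by
  simp [expAd, d.bracket_eq, hqp, hqp.symm]

lemma expAdNeg_qq (hqp : q ≠ p) :
    expAd (-(d.E p q r)) (d.E q q s) = d.E q q s - d.E p q (r + s) := by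
  simp [expAd, d.bracket_eq, hqp, hqp.symm, sub_eq_add_neg]

lemma expAd_self (hqp : q ≠ p) :
    expAd (d.E p q r) (d.E p q s) = d.E p q s := by
  simp [expAd, d.bracket_eq, hqp, hqp.symm]

lemma expAdNeg_self (hqp : q ≠ p) :
    expAd (-(d.E p q r)) (d.E p q s) = d.E p q s := by
  simp [expAd, d.bracket_eq, hqp, hqp.symm]

lemma expAd_diag (hqp : q ≠ p) (hrs : r + s ≠ 0) :
    expAd (d.E p q r) (d.E q p s) =
      d.E q p s + d.E p p (r + s) - d.E q q (r + s) - d.E p q (2 * r + s) := by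
  have hb1 : ⁅d.E p q r, d.E q p s⁆ = d.E p p (r+s) - d.E q q (r+s) := by
    simp [d.bracket_eq, hqp, hqp.symm, hrs]
  have hb2 : ⁅d.E p q r, d.E p p (r+s) - d.E q q (r+s)⁆ = (-2 : ℂ) • d.E p q (2*r+s) := by
    have e1 : r + (r + s) = 2*r + s := by ring
    simp [lie_sub, d.bracket_eq, hqp, hqp.symm, e1, sub_eq_add_neg, two_smul]
  rw [expAd, hb1, hb2, smul_smul]
  norm_num
  abel

lemma expAdNeg_diag (hqp : q ≠ p) (hrs : r + s ≠ 0) :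
    expAd (-(d.E p q r)) (d.E q p s) =
      d.E q p s - d.E p p (r + s) + d.E q q (r + s) - d.E p q (2 * r + s) := by
  have hb1 : ⁅d.E p q r, d.E q p s⁆ = d.E p p (r+s) - d.E q q (r+s) := by
    simp [d.bracket_eq, hqp, hqp.symm, hrs]
  have hb2 : ⁅d.E p q r, d.E p p (r+s) - d.E q q (r+s)⁆ = (-2 : ℂ) • d.E p q (2*r+s) := by
    have e1 : r + (r + s) = 2*r + s := by ring
    simp [lie_sub, d.bracket_eq, hqp, hqp.symm, e1, sub_eq_add_neg, two_smul]
  rw [expAd, neg_lie, lie_neg, neg_lie, neg_neg, hb1, hb2, smul_smul]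
  norm_num
  abel

end expAdLemmas
end Aux16
section Aux16b
variable {N : ℕ} {L : Type} [LieRing L] [LieAlgebra ℂ L]
variable (d : AffineGLData N L)

/- ### linearity -/

lemma expAd_add (X A B : L) : expAd X (A + B) = expAd X A + expAd X B := by
  simp only [expAd, lie_add, smul_add]; abel

lemma expAd_sub (X A B : L) : expAd X (A - B) = expAd X A - expAd X B := by
  simp only [expAd, lie_sub, smul_sub]; abel

lemma expAd_smul (X : L) (t : ℂ) (A : L) : expAd X (t • A) = t • expAd X A := by
  simp [expAd, smul_add, smul_comm t]

lemma expAd_neg2 (X A : L) : expAd X (-A) = -expAd X A := by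
  rw [expAd, expAd, lie_neg, lie_neg, smul_neg]; abel

lemma Taff_smul (k : ZMod N) (t : ℂ) (A : L) : Taff d k (t • A) = t • Taff d k A := by
  simp [Taff, expAd_smul]

lemma Taff_neg (k : ZMod N) (A : L) : Taff d k (-A) = -Taff d k A := by
  simp [Taff, expAd_neg2]

lemma TaffComp_smul (ks : List (ZMod N)) (t : ℂ) (A : L) :
    TaffComp d ks (t • A) = t • TaffComp d ks A := by
  induction ks with
  | nil => rfl
  | cons k ks ih => simp only [TaffComp, List.foldr_cons] at ih ⊢; rw [ih, Taff_smul]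

lemma TaffComp_neg (ks : List (ZMod N)) (A : L) :
    TaffComp d ks (-A) = -TaffComp d ks A := by
  induction ks with
  | nil => rfl
  | cons k ks ih => simp only [TaffComp, List.foldr_cons] at ih ⊢; rw [ih, Taff_neg]

lemma TaffComp_append (l1 l2 : List (ZMod N)) (A : L) :
    TaffComp d (l1 ++ l2) A = TaffComp d l1 (TaffComp d l2 A) :=
  List.foldr_append

/- ### the rules -/

lemma R1 (k a b : ZMod N) (s : ℤ)
    (hak : a ≠ k) (hak1 : a ≠ k+1) (hbk : b ≠ k) (hbk1 : b ≠ k+1) :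
    Taff d k (d.E a b s) = d.E a b s := by
  rw [Taff, xp_eq16, xm_eq16]
  simp only [expAd_add, expAd_sub, expAd_neg2, expAd_smul,
    expAd_triv, expAdNeg_triv, expAd_row, expAdNeg_row, expAd_col, expAdNeg_col,
    hak, hak1, hbk, hbk1, hak.symm, hak1.symm, hbk.symm, hbk1.symm, ne_eq,
    not_false_iff]

lemma R3 (k b : ZMod N) (s : ℤ)
    (h1 : k+1 ≠ k) (hbk : b ≠ k) (hbk1 : b ≠ k+1) :
    Taff d k (d.E (k+1) b s) = d.E k b (eps16 k + s) := by
  rw [Taff, xp_eq16, xm_eq16]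
  rw [expAd_row d k (k+1) b (eps16 k) s h1 hbk hbk1]
  rw [expAd_add, expAdNeg_triv d (k+1) k (k+1) b (-eps16 k) s h1.symm hbk1,
    expAdNeg_row d (k+1) k b (-eps16 k) (eps16 k + s) h1.symm hbk1 hbk]
  have e1 : -eps16 k + (eps16 k + s) = s := by ring
  rw [e1, expAd_add, expAd_sub,
    expAd_row d k (k+1) b (eps16 k) s h1 hbk hbk1,
    expAd_triv d k (k+1) k b (eps16 k) (eps16 k + s) h1 hbk]
  abel

lemma R5 (k a : ZMod N) (s : ℤ)
    (h1 : k+1 ≠ k) (hak : a ≠ k) (hak1 : a ≠ k+1) :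
    Taff d k (d.E a (k+1) s) = d.E a k (-eps16 k + s) := by
  rw [Taff, xp_eq16, xm_eq16]
  rw [expAd_triv d k (k+1) a (k+1) (eps16 k) s hak1.symm h1,
    expAdNeg_col d (k+1) k a (-eps16 k) s h1.symm hak1 hak,
    expAd_add,
    expAd_triv d k (k+1) a (k+1) (eps16 k) s hak1.symm h1,
    expAd_col d k (k+1) a (eps16 k) (-eps16 k + s) h1 hak hak1]
  have e1 : eps16 k + (-eps16 k + s) = s := by ring
  rw [e1]
  abel

lemma R6 (k : ZMod N) (s : ℤ)
    (h1 : k+1 ≠ k) (hs : eps16 k + s ≠ 0) :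
    Taff d k (d.E (k+1) k s) = -d.E k (k+1) (2*eps16 k + s) := by
  have e1 : -eps16 k + (eps16 k + s) = s := by ring
  have e2 : -eps16 k + (2*eps16 k + s) = eps16 k + s := by ring
  have e3 : 2*(-eps16 k) + (2*eps16 k + s) = s := by ring
  have hmid : expAd (-(d.E (k+1) k (-eps16 k)))
      (d.E (k+1) k s + d.E k k (eps16 k + s) - d.E (k+1) (k+1) (eps16 k + s)
        - d.E k (k+1) (2*eps16 k + s)) = -d.E k (k+1) (2*eps16 k + s) := by
    rw [expAd_sub, expAd_sub, expAd_add,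
      expAdNeg_self d (k+1) k (-eps16 k) s h1.symm,
      expAdNeg_qq d (k+1) k (-eps16 k) (eps16 k + s) h1.symm,
      expAdNeg_pp d (k+1) k (-eps16 k) (eps16 k + s) h1.symm,
      expAdNeg_diag d (k+1) k (-eps16 k) (2*eps16 k + s) h1.symm (by rw [e2]; exact hs)]
    rw [e1, e2, e3]
    abel
  rw [Taff, xp_eq16, xm_eq16,
    expAd_diag d k (k+1) (eps16 k) s h1 hs, hmid, expAd_neg2,
    expAd_self d k (k+1) (eps16 k) (2*eps16 k + s) h1]

end Aux16b
section Aux16c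
variable {N : ℕ} {L : Type} [LieRing L] [LieAlgebra ℂ L]
variable (d : AffineGLData N L)

lemma eps16_of_ne {k : ZMod N} (h : k ≠ 0) : eps16 k = 0 := by simp [eps16, h]
lemma eps16_zero : eps16 (0 : ZMod N) = 1 := by simp [eps16]

/-- fixed points -/
lemma TaffComp_fixed [NeZero N] (hN : 3 ≤ N) (ks : List (ZMod N)) (a b : ZMod N) (s : ℤ)
    (h : ∀ j ∈ ks, a ≠ j ∧ a ≠ j+1 ∧ b ≠ j ∧ b ≠ j+1) :
    TaffComp d ks (d.E a b s) = d.E a b s := by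
  induction ks with
  | nil => rfl
  | cons k ks ih =>
      have hk := h k (by simp)
      simp only [TaffComp, List.foldr_cons] at ih ⊢
      rw [ih (fun j hj => h j (by simp [hj])), R1 d k a b s hk.1 hk.2.1 hk.2.2.1 hk.2.2.2]

/-- chain with no affine node: moves row `c+n` down to `c`. -/
lemma chain0 [NeZero N] (hN : 3 ≤ N) : ∀ (n : ℕ) (c b : ZMod N) (s : ℤ),
    (∀ k : ℕ, k ≤ n → b ≠ c + (k : ZMod N)) →
    (∀ k : ℕ, k < n → c + (k : ZMod N) ≠ 0) →
    TaffComp d ((List.range n).map fun k : ℕ => c + (k : ZMod N)) (d.E (c + (n : ZMod N)) b s)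
      = d.E c b s := by
  intro n
  induction n with
  | zero => intro c b s _ _; simp [TaffComp]
  | succ n ih =>
      intro c b s hb hz
      rw [List.range_succ, List.map_append, TaffComp_append]
      simp only [List.map_cons, List.map_nil, TaffComp, List.foldr_cons, List.foldr_nil]
      have hcast : (((n+1 : ℕ)) : ZMod N) = (n : ZMod N) + 1 := by push_cast; ring
      have h1 : (c + (n : ZMod N)) + 1 ≠ c + (n : ZMod N) := succ_ne16 hN _
      have hbk : b ≠ c + (n : ZMod N) := hb n (by omega)
      have hbk1 : b ≠ c + (n : ZMod N) + 1 := by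
        have := hb (n+1) (by omega); rwa [hcast, ← add_assoc] at this
      have key : Taff d (c + (n:ZMod N)) (d.E (c + ((n+1:ℕ) : ZMod N)) b s)
          = d.E (c + (n:ZMod N)) b s := by
        rw [hcast, ← add_assoc, R3 d (c + (n:ZMod N)) b s h1 hbk hbk1,
          eps16_of_ne (hz n (by omega)), zero_add]
      rw [key]
      exact ih c b s (fun k hk => hb k (by omega)) (fun k hk => hz k (by omega))

/-- chain crossing the affine node once: degree bump. -/
lemma chain1 [NeZero N] (hN : 3 ≤ N) (n : ℕ) (c b : ZMod N) (s : ℤ) (p : ℕ)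
    (hp : p < n) (hc : c + (p : ZMod N) = 0)
    (hb : ∀ k : ℕ, k ≤ n → b ≠ c + (k : ZMod N))
    (hz : ∀ k : ℕ, k < n → k ≠ p → c + (k : ZMod N) ≠ 0) :
    TaffComp d ((List.range n).map fun k : ℕ => c + (k : ZMod N)) (d.E (c + (n : ZMod N)) b s)
      = d.E c b (s + 1) := by
  obtain ⟨q, rfl⟩ : ∃ q, n = (p + 1) + q := ⟨n - (p+1), by omega⟩
  rw [List.range_add, List.map_append, List.map_map, TaffComp_append, List.range_succ,
    List.map_append, TaffComp_append]
  -- suffix chain: rows c+n → c+p+1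
  have suffix : TaffComp d ((List.range q).map ((fun k : ℕ => c + (k : ZMod N)) ∘ (p+1+·)))
      (d.E (c + ((p+1+q : ℕ) : ZMod N)) b s) = d.E (c + ((p+1 : ℕ) : ZMod N)) b s := by
    have hfun : ((fun k : ℕ => c + (k : ZMod N)) ∘ (p+1+·))
        = fun k : ℕ => (c + ((p+1:ℕ) : ZMod N)) + (k : ZMod N) := by
      funext k; simp [Function.comp]; push_cast; ring
    have hrow : (c + ((p+1+q : ℕ) : ZMod N)) = (c + ((p+1:ℕ) : ZMod N)) + (q : ZMod N) := by
      push_cast; ring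
    rw [hfun, hrow]
    refine chain0 d hN q _ b s (fun k hk => ?_) (fun k hk => ?_)
    · have := hb (p+1+k) (by omega); rw [show c + ((p+1:ℕ):ZMod N) + (k:ZMod N)
        = c + ((p+1+k : ℕ) : ZMod N) by push_cast; ring]; exact this
    · have := hz (p+1+k) (by omega) (by omega); rw [show c + ((p+1:ℕ):ZMod N) + (k:ZMod N)
        = c + ((p+1+k : ℕ) : ZMod N) by push_cast; ring]; exact this
  rw [suffix]
  -- the affine step at c+p = 0
  have hstep : TaffComp d [c + (p : ZMod N)] (d.E (c + ((p+1:ℕ) : ZMod N)) b s)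
      = d.E (c + (p : ZMod N)) b (s + 1) := by
    have hc1 : c + ((p+1:ℕ) : ZMod N) = (c + (p : ZMod N)) + 1 := by push_cast; ring
    have h1 : (c + (p:ZMod N)) + 1 ≠ c + (p:ZMod N) := succ_ne16 hN _
    have hbk : b ≠ c + (p:ZMod N) := hb p (by omega)
    have hbk1 : b ≠ c + (p:ZMod N) + 1 := by
      have := hb (p+1) (by omega); rwa [hc1] at this
    simp only [TaffComp, List.foldr_cons, List.foldr_nil]
    rw [hc1, R3 d _ b s h1 hbk hbk1, hc, eps16_zero, add_comm]
  simp only [List.map_cons, List.map_nil]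
  rw [hstep]
  -- prefix chain: rows c+p = 0 → c
  refine chain0 d hN p c b (s+1) (fun k hk => hb k (by omega))
    (fun k hk => hz k (by omega) (by omega))
end Aux16c
section Aux16d
variable {N : ℕ} {L : Type} [LieRing L] [LieAlgebra ℂ L]
variable (d : AffineGLData N L)

lemma add_cast_eq_zero_iff16 [NeZero N] (i : ZMod N) (k : ℕ) :
    i + (k : ZMod N) = 0 ↔ N ∣ (i.val + k) := by
  rw [← ZMod.natCast_eq_zero_iff]
  push_cast [ZMod.natCast_rightInverse i]
  constructor <;> intro h <;> linear_combination h

lemma tailWord_eq (i : ZMod N) :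
    tailWord N i = (List.range (N-2)).map (fun k : ℕ => (i+1) + (k : ZMod N)) := by
  unfold tailWord
  simp only [bind_pure_comp, List.map_eq_map, List.map_map]
  exact List.map_congr_left (fun a _ => by simp [Function.comp]; ring)

lemma castNsub2 [NeZero N] (hN : 3 ≤ N) : ((N-2 : ℕ) : ZMod N) + 2 = 0 := by
  rw [show ((2:ZMod N)) = ((2:ℕ) : ZMod N) by push_cast; ring, ← Nat.cast_add,
    show N - 2 + 2 = N by omega]
  exact ZMod.natCast_self N

/-- the first block as a chain: moves `E (i-1) i` to `E (i+1) i`. -/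
lemma chainB1 [NeZero N] (hN : 3 ≤ N) (i : ZMod N) (s : ℤ) :
    TaffComp d (tailWord N i) (d.E (i-1) i s)
      = d.E (i+1) i (s + 1 - eps16 i - eps16 (i-1)) := by
  rw [tailWord_eq]
  have hrow : i - 1 = (i+1) + ((N-2 : ℕ) : ZMod N) := by
    linear_combination - castNsub2 (N := N) hN
  have hb : ∀ k : ℕ, k ≤ N-2 → i ≠ (i+1) + (k : ZMod N) := by
    intro k hk h
    have h0 : (1 : ZMod N) + (k : ZMod N) = 0 := by linear_combination -h
    have : ((1 + k : ℕ) : ZMod N) = 0 := by push_cast; linear_combination h0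
    exact natCast_ne16 (1+k) (by omega) (by omega) this
  by_cases h0 : i = 0
  · subst h0
    have hz : ∀ k : ℕ, k < N-2 → (0:ZMod N) + 1 + (k : ZMod N) ≠ 0 := by
      intro k hk h
      have : ((1 + k : ℕ) : ZMod N) = 0 := by push_cast; linear_combination h
      exact natCast_ne16 (1+k) (by omega) (by omega) this
    have hres := chain0 d hN (N-2) ((0:ZMod N)+1) 0 s hb hz
    rw [← hrow] at hres
    rw [hres]
    have e1 : eps16 ((0:ZMod N) - 1) = 0 := by
      apply eps16_of_ne; intro h
      have h2 : (1:ZMod N) + ((N-2:ℕ) : ZMod N) = 0 := by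
        rw [hrow] at h; linear_combination h
      have : ((1 + (N-2) : ℕ) : ZMod N) = 0 := by push_cast; linear_combination h2
      exact natCast_ne16 (1+(N-2)) (by omega) (by omega) this
    rw [eps16_zero, e1]
    congr 1; ring
  · by_cases h1 : i = 1
    · subst h1
      have hz : ∀ k : ℕ, k < N-2 → (1:ZMod N) + 1 + (k : ZMod N) ≠ 0 := by
        intro k hk h
        have : ((2 + k : ℕ) : ZMod N) = 0 := by push_cast; linear_combination h
        exact natCast_ne16 (2+k) (by omega) (by omega) this
      have hres := chain0 d hN (N-2) ((1:ZMod N)+1) 1 s hb hz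
      rw [← hrow] at hres
      rw [hres]
      have e0 : eps16 ((1:ZMod N) - 1) = 1 := by rw [sub_self]; exact eps16_zero
      rw [e0, eps16_of_ne (one_ne16 hN)]
      congr 1; ring
    · have hv2 : 2 ≤ i.val := by
        rcases Nat.lt_or_ge i.val 2 with h | h
        · interval_cases hv : i.val
          · exact absurd (by rw [← ZMod.natCast_rightInverse i, hv]; simp) h0
          · exact absurd (by rw [← ZMod.natCast_rightInverse i, hv]; simp) h1
        · exact h
      have hvN : i.val < N := ZMod.val_lt i
      set p : ℕ := N - 1 - i.val with hp_def
      have hc : (i + 1) + (p : ZMod N) = 0 := by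
        rw [show (i+1) + (p:ZMod N) = i + ((1+p : ℕ) : ZMod N) by push_cast; ring,
          add_cast_eq_zero_iff16]
        exact ⟨1, by omega⟩
      have hz : ∀ k : ℕ, k < N-2 → k ≠ p → (i+1) + (k : ZMod N) ≠ 0 := by
        intro k hk hkp h
        rw [show (i+1) + (k:ZMod N) = i + ((1+k : ℕ) : ZMod N) by push_cast; ring,
          add_cast_eq_zero_iff16] at h
        obtain ⟨t, ht⟩ := h
        have h1t : t ≠ 0 := by rintro rfl; omega
        have h2t : t < 2 := by
          by_contra hge
          push_neg at hge
          have : N * 2 ≤ N * t := Nat.mul_le_mul_left N hge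
          omega
        have : t = 1 := by omega
        subst this
        omega
      have hres := chain1 d hN (N-2) (i+1) i s p (by omega) hc hb hz
      rw [← hrow] at hres
      rw [hres]
      rw [eps16_of_ne h0, eps16_of_ne (fun h => h1 (by linear_combination h))]
      congr 1; ring

/-- the middle word `[i-1, i, i-1]`. -/
lemma middle16 [NeZero N] (hN : 3 ≤ N) (i : ZMod N) (s : ℤ) (hs : 1 ≤ s + eps16 i) :
    TaffComp d [i-1, i, i-1] (d.E (i+1) i s)
      = -d.E (i-1) i (s + eps16 (i-1) + eps16 i) := by
  have hii : (i - 1) + 1 = i := sub_add_cancel i 1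
  have h1 : (i-1) + 1 ≠ i - 1 := succ_ne16 hN _
  have h1' : i + 1 ≠ i := succ_ne16 hN i
  have h2 : i + 1 ≠ i - 1 := by
    intro h; exact two_ne16 hN (by linear_combination h)
  have h2' : i - 1 ≠ i + 1 := fun h => h2 h.symm
  have h3 : i - 1 ≠ i := by
    intro h; exact one_ne16 hN (by linear_combination -h)
  simp only [TaffComp, List.foldr_cons, List.foldr_nil]
  have s1 : Taff d (i-1) (d.E (i+1) i s) = d.E (i+1) (i-1) (-eps16 (i-1) + s) := by
    have := R5 d (i-1) (i+1) s h1 h2 (by rw [hii]; exact h1')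
    rwa [hii] at this
  have s2 : Taff d i (d.E (i+1) (i-1) (-eps16 (i-1) + s))
      = d.E i (i-1) (eps16 i + (-eps16 (i-1) + s)) :=
    R3 d i (i-1) _ h1' h3 h2'
  have s3 : Taff d (i-1) (d.E i (i-1) (eps16 i + (-eps16 (i-1) + s)))
      = -d.E (i-1) i (2 * eps16 (i-1) + (eps16 i + (-eps16 (i-1) + s))) := by
    have hcond : eps16 (i-1) + (eps16 i + (-eps16 (i-1) + s)) ≠ 0 := by
      have he : eps16 (i-1) + (eps16 i + (-eps16 (i-1) + s)) = s + eps16 i := by ring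
      omega
    have := R6 d (i-1) (eps16 i + (-eps16 (i-1) + s)) h1 hcond
    rwa [hii] at this
  rw [s1, s2, s3]
  congr 1
  ring
end Aux16d
section Aux16e
variable {N : ℕ} {L : Type} [LieRing L] [LieAlgebra ℂ L]
variable (d : AffineGLData N L)

lemma tWord_eq (i : ZMod N) :
    tWord N i = tailWord N i ++ [i-1, i, i-1] ++
      ((List.range (N-3)).map (fun k : ℕ => i + (k : ZMod N) + 2)).reverse := by
  unfold tWord tailWord
  simp only [bind_pure_comp, List.map_eq_map, List.map_map]
  rfl

lemma tW16 [NeZero N] (hN : 3 ≤ N) (i : ZMod N) (s : ℤ) (hs : 1 ≤ s + eps16 i) :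
    TaffComp d (tWord N i) (d.E (i+1) i s) = -d.E (i+1) i (s+1) := by
  rw [tWord_eq, TaffComp_append, TaffComp_append]
  have hfix : TaffComp d ((List.range (N-3)).map (fun k : ℕ => i + (k:ZMod N) + 2)).reverse
      (d.E (i+1) i s) = d.E (i+1) i s := by
    apply TaffComp_fixed d hN
    intro j hj
    simp only [List.mem_reverse, List.mem_map, List.mem_range] at hj
    obtain ⟨k, hk, rfl⟩ := hj
    have c1 : ((k+1 : ℕ) : ZMod N) ≠ 0 := natCast_ne16 _ (by omega) (by omega)
    have c2 : ((k+2 : ℕ) : ZMod N) ≠ 0 := natCast_ne16 _ (by omega) (by omega)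
    have c3 : ((k+3 : ℕ) : ZMod N) ≠ 0 := natCast_ne16 _ (by omega) (by omega)
    refine ⟨fun h => c1 ?_, fun h => c2 ?_, fun h => c2 ?_, fun h => c3 ?_⟩
    · push_cast; linear_combination -h
    · push_cast; linear_combination -h
    · push_cast; linear_combination -h
    · push_cast; linear_combination -h
  rw [hfix, middle16 d hN i s hs, TaffComp_neg, chainB1 d hN i _]
  congr 2
  ring

lemma tail16 [NeZero N] (hN : 3 ≤ N) (i : ZMod N) :
    TaffComp d (tailWord N i) (xp d (i-1)) = d.E (i+1) i (1 - eps16 i) := by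
  rw [xp_eq16, sub_add_cancel, chainB1 d hN i _]
  congr 1
  ring

lemma key16 [NeZero N] (hN : 3 ≤ N) (i : ZMod N) (m : ℕ) (hm : 1 ≤ m) :
    TaffComp d (wWord N i m) (xp d (i-1))
      = ((-1:ℂ))^(m-1) • d.E (i+1) i ((m:ℤ) - eps16 i) := by
  induction m, hm using Nat.le_induction with
  | base =>
      simp only [wWord, Nat.sub_self, List.replicate_zero, List.flatten_nil, List.nil_append]
      rw [tail16 d hN i]
      norm_num
  | succ m hm ih =>
      have hsplit : wWord N i (m+1) = tWord N i ++ wWord N i m := by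
        unfold wWord
        rw [show m+1-1 = (m-1)+1 by omega, List.replicate_succ, List.flatten_cons,
          List.append_assoc]
      have hs : 1 ≤ ((m:ℤ) - eps16 i) + eps16 i := by omega
      rw [hsplit, TaffComp_append, ih, TaffComp_smul, tW16 d hN i _ hs]
      have e : ((m:ℤ) - eps16 i) + 1 = ((m+1 : ℕ) : ℤ) - eps16 i := by push_cast; ring
      rw [e, show m+1-1 = (m-1)+1 by omega, pow_succ, mul_smul, neg_one_smul, smul_neg]
end Aux16e
theorem stmt16 (N : ℕ) [NeZero N] (hN : 3 ≤ N) (L : Type) [LieRing L] [LieAlgebra ℂ L]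
    (d : AffineGLData N L) (i : ZMod N) (m : ℕ) (hm : 1 ≤ m) :
    ⁅xp d i, TaffComp d (wWord N i m) (xp d (i - 1))⁆ =
      ((-1 : ℂ)) ^ (m - 1) •
        (if i = 0 then d.E 0 0 (m : ℤ) - d.E 1 1 (m : ℤ)
         else d.E i i (m : ℤ) - d.E (i + 1) (i + 1) (m : ℤ)) := by
  rw [key16 d hN i m hm, lie_smul, xp_eq16, d.bracket_eq]
  have hm0 : ¬(eps16 i + ((m:ℤ) - eps16 i) = 0) := by omega
  have e : eps16 i + ((m:ℤ) - eps16 i) = (m:ℤ) := by ring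
  simp only [if_pos rfl, hm0, and_false, if_false, e]
  by_cases h : i = 0
  · subst h; norm_num
    exact fun h0 => absurd h0 (by omega)
  · rw [if_neg h]; norm_num
    exact fun h0 => absurd h0 (by omega)
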